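/- Let β₀, β₁, t, r ∈ ℂ with |β₀|² + |β₁|² = 1, β₀ ≠ 0, |t| ≤ 1 and |r| ≤ 1, and let ψ = !![β₀, r·β₁; t·β₁, 0] be the coefficient matrix of the coupler output state. Then there exist u, w : Fin 2 → ℂ such that the Euclidean distance satisfies √(Σ_{i,j} |ψ i j − u i * w j|²) ≤ |β₁|² / |β₀|; i.e., for small one-particle amplitude β₁ the output is approximately a product state. -/

import Mathlib

/-- For a normalized input state with `β₀ ≠ 0` and `|t|, |r| ≤ 1`, the coupler
output `ψ = !![β₀, r·β₁; t·β₁, 0]` is within ℓ²-distance `|β₁|²/|β₀|` of some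
product state: for small `β₁` the output is approximately a product state. -/
theorem coupler_output_approx_product_state (β₀ β₁ t r : ℂ)
    (hnorm : ‖β₀‖ ^ 2 + ‖β₁‖ ^ 2 = 1)
    (hβ₀ : β₀ ≠ 0) (ht : ‖t‖ ≤ 1) (hr : ‖r‖ ≤ 1)
    (ψ : Matrix (Fin 2) (Fin 2) ℂ)
    (hψ : ψ = !![β₀, r * β₁; t * β₁, 0]) :
    ∃ u w : Fin 2 → ℂ,
      Real.sqrt (∑ i, ∑ j, ‖ψ i j - u i * w j‖ ^ 2)
        ≤ ‖β₁‖ ^ 2 / ‖β₀‖ := by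
  refine ⟨![β₀, t * β₁], ![1, r * β₁ / β₀], ?_⟩
  have hsum : (∑ i, ∑ j, ‖ψ i j - ![β₀, t * β₁] i * ![1, r * β₁ / β₀] j‖ ^ 2)
      = ‖t * β₁ * (r * β₁ / β₀)‖ ^ 2 := by
    subst hψ
    simp [Fin.sum_univ_two, Matrix.cons_val_zero, Matrix.cons_val_one]
    field_simp
    ring
  rw [hsum, Real.sqrt_sq (norm_nonneg _)]
  have : ‖t * β₁ * (r * β₁ / β₀)‖
      = ‖t‖ * ‖r‖ * (‖β₁‖ ^ 2 / ‖β₀‖) := by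
    simp [norm_mul, norm_div]
    ring
  rw [this]
  have h0 : (0:ℝ) ≤ ‖β₁‖ ^ 2 / ‖β₀‖ := by positivity
  have h1 : ‖t‖ * ‖r‖ ≤ 1 :=
    mul_le_one₀ ht (norm_nonneg _) hr
  calc ‖t‖ * ‖r‖ * (‖β₁‖ ^ 2 / ‖β₀‖)
      ≤ 1 * (‖β₁‖ ^ 2 / ‖β₀‖) := mul_le_mul_of_nonneg_right h1 h0
    _ = _ := one_mul _
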